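/- arXiv:1805.06116 — 8 statements merged into one kernel-verified Lean document; each statement's English description precedes it below -/
import Mathlib

section
/- Let S = {x_1,...,x_N} be N distinct points in R^n, f a continuous function on R^n, and e_1,...,e_N continuous functions on R^n with |e_i(t)| = 1 for all t. Suppose |f(x_i - x_j)| < |f(0)|/(N-1) whenever i ≠ j. Then the functions t ↦ e_i(t) f(t - x_i), i = 1,...,N, are linearly independent over the complex numbers. -/
open scoped BigOperators

/-- Lemma 1: if the unimodular-twisted translates of a continuous `f` by points
that are separated relative to the decay of `f` are involved, they are linearly
independent. -/
theorem stmt_0 {n N : ℕ} (hN : 2 ≤ N)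
    (x : Fin N → EuclideanSpace ℝ (Fin n)) (hx : Function.Injective x)
    (f : EuclideanSpace ℝ (Fin n) → ℂ) (hf : Continuous f)
    (e : Fin N → EuclideanSpace ℝ (Fin n) → ℂ) (he : ∀ i, Continuous (e i))
    (hmod : ∀ i t, ‖e i t‖ = 1)
    (hsep : ∀ i j, i ≠ j →
      ‖f (x i - x j)‖ < ‖f 0‖ / ((N : ℝ) - 1)) :
    LinearIndependent ℂ
      (fun i : Fin N => (fun t => e i t * f (t - x i) :
        EuclideanSpace ℝ (Fin n) → ℂ)) := by
  rw [Fintype.linearIndependent_iff]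
  intro g hg j
  by_contra hgj
  have hN1 : (0:ℝ) < (N:ℝ) - 1 := by
    have : (2:ℝ) ≤ (N:ℝ) := by exact_mod_cast hN
    linarith
  have hf0 : 0 < ‖f 0‖ := by
    have h01 : (⟨0, by omega⟩ : Fin N) ≠ ⟨1, by omega⟩ := by
      simp [Fin.ext_iff]
    have h2 := hsep _ _ h01
    have h0 := norm_nonneg (f (x ⟨0, by omega⟩ - x ⟨1, by omega⟩))
    have h3 : 0 < ‖f 0‖ / ((N:ℝ)-1) := lt_of_le_of_lt h0 h2
    have := (lt_div_iff₀ hN1).mp h3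
    linarith
  obtain ⟨k, -, hk⟩ := Finset.exists_max_image (Finset.univ : Finset (Fin N))
    (fun i => ‖g i‖) ⟨j, Finset.mem_univ j⟩
  have hgk : 0 < ‖g k‖ :=
    lt_of_lt_of_le (by simpa using (norm_pos_iff.mpr hgj)) (hk j (Finset.mem_univ j))
  have hpt : ∑ i, g i * (e i (x k) * f (x k - x i)) = 0 := by
    have := congrFun hg (x k)
    simpa [Finset.sum_apply, smul_eq_mul, mul_assoc] using this
  have hsplit : g k * (e k (x k) * f 0) =
      - ∑ i ∈ Finset.univ.erase k, g i * (e i (x k) * f (x k - x i)) := by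
    have h := Finset.add_sum_erase Finset.univ
      (fun i => g i * (e i (x k) * f (x k - x i))) (Finset.mem_univ k)
    rw [← h] at hpt
    have := eq_neg_of_add_eq_zero_left hpt
    simpa [sub_self] using this
  have habs : ‖g k‖ * ‖f 0‖ ≤
      ∑ i ∈ Finset.univ.erase k, ‖g i‖ * ‖f (x k - x i)‖ := by
    have h1 : ‖g k‖ * ‖f 0‖ =
        ‖g k * (e k (x k) * f 0)‖ := by
      rw [norm_mul, norm_mul, hmod]; ring
    rw [h1, hsplit, norm_neg]
    refine (norm_sum_le _ _).trans ?_
    apply Finset.sum_le_sum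
    intro i _
    rw [norm_mul, norm_mul, hmod]
    simp
  have hlt : ∑ i ∈ Finset.univ.erase k, ‖g i‖ * ‖f (x k - x i)‖ <
      ‖g k‖ * ‖f 0‖ := by
    have hcard : (((Finset.univ : Finset (Fin N)).erase k).card : ℝ) = (N:ℝ) - 1 := by
      rw [Finset.card_erase_of_mem (Finset.mem_univ k)]
      simp only [Finset.card_univ, Fintype.card_fin]
      rw [Nat.cast_sub (by omega)]; simp
    have hne : ((Finset.univ : Finset (Fin N)).erase k).Nonempty := by
      rw [← Finset.card_pos, Finset.card_erase_of_mem (Finset.mem_univ k)]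
      simp only [Finset.card_univ, Fintype.card_fin]; omega
    calc ∑ i ∈ Finset.univ.erase k, ‖g i‖ * ‖f (x k - x i)‖
        < ∑ _i ∈ Finset.univ.erase k,
            ‖g k‖ * (‖f 0‖ / ((N:ℝ)-1)) := by
          apply Finset.sum_lt_sum_of_nonempty hne
          intro i hi
          have hik : i ≠ k := Finset.ne_of_mem_erase hi
          have h1 := hk i (Finset.mem_univ i)
          have h2 := hsep k i hik.symm
          have h3 : ‖g i‖ * ‖f (x k - x i)‖ ≤
              ‖g k‖ * ‖f (x k - x i)‖ :=
            mul_le_mul_of_nonneg_right h1 (norm_nonneg _)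
          have h4 : ‖g k‖ * ‖f (x k - x i)‖ <
              ‖g k‖ * (‖f 0‖ / ((N:ℝ)-1)) :=
            mul_lt_mul_of_pos_left h2 hgk
          linarith
      _ = ‖g k‖ * ‖f 0‖ := by
          rw [Finset.sum_const, nsmul_eq_mul, hcard]
          field_simp
  linarith
end

section
/- Let f : R^n → C be continuous with f(0) ≠ 0, let Λ = {(x_1,ω_1),...,(x_N,ω_N)} ⊂ R^{2n} with the x_i pairwise distinct, and suppose R > 0 is such that |f(t)| < |f(0)|/(N-1) for all t with ‖t‖ > R. If ‖x_i - x_j‖ > R for all i ≠ j, then the time-frequency translates π(x_i,ω_i)f(t) = exp(2πi ω_i·t) f(t - x_i) are linearly independent. -/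
open scoped BigOperators

/-- Theorem 1: time-frequency translates of `f ∈ C(ℝⁿ)` are linearly independent
when the time coordinates are separated by more than `R`, where `|f| < |f 0|/(N-1)`
outside the ball of radius `R`. -/
theorem stmt_2 {n N : ℕ} (hN : 2 ≤ N)
    (f : EuclideanSpace ℝ (Fin n) → ℂ) (hf : Continuous f) (hf0 : f 0 ≠ 0)
    (x ω : Fin N → EuclideanSpace ℝ (Fin n)) (hx : Function.Injective x)
    (R : ℝ) (hR : 0 < R)
    (hdecay : ∀ t : EuclideanSpace ℝ (Fin n), R < ‖t‖ →
      ‖f t‖ < ‖f 0‖ / ((N : ℝ) - 1))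
    (hsep : ∀ i j, i ≠ j → R < ‖x i - x j‖) :
    LinearIndependent ℂ
      (fun i : Fin N => (fun t =>
        Complex.exp (2 * Real.pi * Complex.I * ((inner ℝ (ω i) t : ℝ) : ℂ)) *
          f (t - x i) : EuclideanSpace ℝ (Fin n) → ℂ)) := by
  have hfa : 0 < ‖f 0‖ := norm_pos_iff.mpr hf0
  rw [Fintype.linearIndependent_iff]
  intro g hg
  by_contra hcon
  push_neg at hcon
  obtain ⟨i0, hi0⟩ := hcon
  obtain ⟨j, -, hj⟩ := Finset.exists_max_image Finset.univ
    (fun i => ‖g i‖) ⟨i0, Finset.mem_univ i0⟩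
  have hgj : 0 < ‖g j‖ :=
    lt_of_lt_of_le (norm_pos_iff.mpr hi0) (hj i0 (Finset.mem_univ _))
  have hev := congrFun hg (x j)
  simp only [Finset.sum_apply, Pi.smul_apply, smul_eq_mul, Pi.zero_apply] at hev
  rw [← Finset.add_sum_erase _ _ (Finset.mem_univ j)] at hev
  have habs_e : ∀ i : Fin N,
      ‖Complex.exp (2 * Real.pi * Complex.I *
        ((inner ℝ (ω i) (x j) : ℝ) : ℂ))‖ = 1 := by
    intro i
    rw [Complex.norm_exp]
    norm_num [Complex.mul_re, Complex.mul_im]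
  have heq := congrArg (‖·‖) (eq_neg_of_add_eq_zero_left hev)
  rw [norm_neg] at heq
  have hlhs : ‖g j * (Complex.exp (2 * Real.pi * Complex.I *
      ((inner ℝ (ω j) (x j) : ℝ) : ℂ)) * f (x j - x j))‖
      = ‖g j‖ * ‖f 0‖ := by
    rw [norm_mul, norm_mul, habs_e j, sub_self, one_mul]
  have hbound : ‖∑ i ∈ Finset.univ.erase j,
      g i * (Complex.exp (2 * Real.pi * Complex.I *
        ((inner ℝ (ω i) (x j) : ℝ) : ℂ)) * f (x j - x i))‖
      < ‖g j‖ * ‖f 0‖ := by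
    calc ‖∑ i ∈ Finset.univ.erase j,
        g i * (Complex.exp (2 * Real.pi * Complex.I *
          ((inner ℝ (ω i) (x j) : ℝ) : ℂ)) * f (x j - x i))‖
        ≤ ∑ i ∈ Finset.univ.erase j, ‖g i‖ * ‖f (x j - x i)‖ := by
          refine le_trans (norm_sum_le _ _) ?_
          refine Finset.sum_le_sum fun i _ => ?_
          rw [norm_mul, norm_mul, habs_e i, one_mul]
      _ < ∑ i ∈ Finset.univ.erase j,
            ‖g j‖ * (‖f 0‖ / ((N : ℝ) - 1)) := by
          refine Finset.sum_lt_sum_of_nonempty ?_ fun i hi => ?_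
          · have : 1 < Finset.univ.card (α := Fin N) := by
              simpa using lt_of_lt_of_le one_lt_two hN
            exact Finset.Nontrivial.erase_nonempty
              (Finset.one_lt_card.mp this)
          · have hij : j ≠ i := (Finset.ne_of_mem_erase hi).symm
            have hnorm : R < ‖x j - x i‖ := hsep j i hij
            have hfd := hdecay _ hnorm
            calc ‖g i‖ * ‖f (x j - x i)‖
                ≤ ‖g j‖ * ‖f (x j - x i)‖ :=
                  mul_le_mul_of_nonneg_right (hj i (Finset.mem_univ i))
                    (norm_nonneg _)
              _ < ‖g j‖ * (‖f 0‖ / ((N : ℝ) - 1)) :=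
                  mul_lt_mul_of_pos_left hfd hgj
      _ = ‖g j‖ * ‖f 0‖ := by
          rw [Finset.sum_const, nsmul_eq_mul]
          have hcard : (Finset.univ.erase j).card = N - 1 := by
            rw [Finset.card_erase_of_mem (Finset.mem_univ j)]
            simp
          rw [hcard, Nat.cast_sub (le_trans one_le_two hN), Nat.cast_one]
          have hN1 : (0 : ℝ) < (N : ℝ) - 1 := by
            have : (2 : ℝ) ≤ (N : ℝ) := by exact_mod_cast hN
            linarith
          field_simp
  rw [hlhs] at heq
  exact absurd heq.symm (ne_of_lt hbound)
end

section
/- Let f ∈ L^1(R^n) with Fourier transform f̂ continuous and vanishing at infinity, f̂(0) = ∫ f ≠ 0. Suppose Λ = {(x_1,ω_1),...,(x_N,ω_N)} ⊂ R^{2n} and R > 0 satisfy |f̂(ω)| < |f̂(0)|/(N-1) for all ‖ω‖ > R, and ‖ω_i - ω_j‖ > R for all i ≠ j. Then the functions π(x_i,ω_i)f are linearly independent in L^2(R^n). -/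
open scoped BigOperators
open MeasureTheory

private lemma aux_int {n : ℕ} (f : EuclideanSpace ℝ (Fin n) → ℂ) (hf : Integrable f)
    (a : EuclideanSpace ℝ (Fin n)) (φ : EuclideanSpace ℝ (Fin n) → ℝ) (hφ : Continuous φ) :
    Integrable (fun t => Complex.exp ((φ t : ℂ) * Complex.I) * f (t - a)) := by
  refine (hf.comp_sub_right a).bdd_mul (c := 1) ?_ (Filter.Eventually.of_forall fun t => ?_)
  · exact (Complex.continuous_exp.comp
      ((Complex.continuous_ofReal.comp hφ).mul continuous_const)).aestronglyMeasurable
  · simp [Complex.norm_exp_ofReal_mul_I]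

private lemma hexp_comb (a b : ℝ) :
    Complex.exp (2 * Real.pi * Complex.I * (a : ℂ)) *
      Complex.exp (-(2 * Real.pi * Complex.I * (b : ℂ))) =
    Complex.exp (((2 * Real.pi * (a - b) : ℝ) : ℂ) * Complex.I) := by
  rw [← Complex.exp_add]; congr 1; push_cast; ring

private lemma key_eval {n N : ℕ}
    (f : EuclideanSpace ℝ (Fin n) → ℂ) (hf : Integrable f)
    (fhat : EuclideanSpace ℝ (Fin n) → ℂ)
    (hfhat : ∀ w : EuclideanSpace ℝ (Fin n),
      fhat w = ∫ t, f t * Complex.exp (-(2 * Real.pi * Complex.I * ((inner ℝ w t : ℝ) : ℂ))))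
    (x ω : Fin N → EuclideanSpace ℝ (Fin n))
    (c : Fin N → ℂ)
    (hdep : ∀ᵐ t : EuclideanSpace ℝ (Fin n),
      ∑ i, c i * (Complex.exp (2 * Real.pi * Complex.I * ((inner ℝ (ω i) t : ℝ) : ℂ)) *
        f (t - x i)) = 0)
    (w : EuclideanSpace ℝ (Fin n)) :
    ∑ i, c i * Complex.exp (-(2 * Real.pi * Complex.I * ((inner ℝ (w - ω i) (x i) : ℝ) : ℂ))) *
      fhat (w - ω i) = 0 := by
  -- the i-th summand of the expanded integrand
  set T : Fin N → EuclideanSpace ℝ (Fin n) → ℂ := fun i t =>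
    c i * (Complex.exp (2 * Real.pi * Complex.I * ((inner ℝ (ω i) t : ℝ) : ℂ)) * f (t - x i)) *
      Complex.exp (-(2 * Real.pi * Complex.I * ((inner ℝ w t : ℝ) : ℂ))) with hT
  have hterm : ∀ i, Integrable (T i) := by
    intro i
    have h1 : T i = fun t =>
        c i * (Complex.exp (((2 * Real.pi * ((inner ℝ (ω i) t : ℝ) - (inner ℝ w t : ℝ)) : ℝ) : ℂ)
          * Complex.I) * f (t - x i)) := by
      funext t
      rw [hT]
      rw [← hexp_comb ((inner ℝ (ω i) t : ℝ)) ((inner ℝ w t : ℝ))]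
      ring
    rw [h1]
    exact (aux_int f hf (x i) _ (continuous_const.mul ((continuous_const.inner continuous_id).sub (continuous_const.inner continuous_id)))).const_mul (c i)
  have hval : ∀ i, ∫ t, T i t =
      c i * Complex.exp (-(2 * Real.pi * Complex.I * ((inner ℝ (w - ω i) (x i) : ℝ) : ℂ))) *
        fhat (w - ω i) := by
    intro i
    have hpt : ∀ t, T i t =
        (c i * Complex.exp (-(2 * Real.pi * Complex.I * ((inner ℝ (w - ω i) (x i) : ℝ) : ℂ)))) *
        (f (t - x i) *
          Complex.exp (-(2 * Real.pi * Complex.I * ((inner ℝ (w - ω i) (t - x i) : ℝ) : ℂ)))) := by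
      intro t
      have hinner : (inner ℝ (ω i) t : ℝ) - (inner ℝ w t : ℝ) +
          (inner ℝ (w - ω i) (x i) : ℝ) + (inner ℝ (w - ω i) (t - x i) : ℝ) = 0 := by
        simp only [inner_sub_left, inner_sub_right]; ring
      have hc : ((inner ℝ (ω i) t : ℝ) : ℂ) - ((inner ℝ w t : ℝ) : ℂ) +
          ((inner ℝ (w - ω i) (x i) : ℝ) : ℂ) + ((inner ℝ (w - ω i) (t - x i) : ℝ) : ℂ) = 0 := by
        exact_mod_cast congrArg (fun r : ℝ => (r : ℂ)) hinner
      have hE : Complex.exp (2 * Real.pi * Complex.I * ((inner ℝ (ω i) t : ℝ) : ℂ)) *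
          Complex.exp (-(2 * Real.pi * Complex.I * ((inner ℝ w t : ℝ) : ℂ))) =
          Complex.exp (-(2 * Real.pi * Complex.I * ((inner ℝ (w - ω i) (x i) : ℝ) : ℂ))) *
          Complex.exp (-(2 * Real.pi * Complex.I * ((inner ℝ (w - ω i) (t - x i) : ℝ) : ℂ))) := by
        rw [← Complex.exp_add, ← Complex.exp_add]
        congr 1
        linear_combination (2 * Real.pi * Complex.I) * hc
      rw [hT]
      linear_combination (c i * f (t - x i)) * hE
    calc ∫ t, T i t
        = ∫ t, (c i * Complex.exp (-(2 * Real.pi * Complex.I *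
            ((inner ℝ (w - ω i) (x i) : ℝ) : ℂ)))) *
          ((fun s => f s * Complex.exp (-(2 * Real.pi * Complex.I *
            ((inner ℝ (w - ω i) s : ℝ) : ℂ)))) (t - x i)) := by
          exact integral_congr_ae (Filter.Eventually.of_forall hpt)
      _ = (c i * Complex.exp (-(2 * Real.pi * Complex.I *
            ((inner ℝ (w - ω i) (x i) : ℝ) : ℂ)))) *
          ∫ t, (fun s => f s * Complex.exp (-(2 * Real.pi * Complex.I *
            ((inner ℝ (w - ω i) s : ℝ) : ℂ)))) (t - x i) := integral_const_mul _ _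
      _ = (c i * Complex.exp (-(2 * Real.pi * Complex.I *
            ((inner ℝ (w - ω i) (x i) : ℝ) : ℂ)))) * fhat (w - ω i) := by
          rw [integral_sub_right_eq_self (fun s => f s * Complex.exp (-(2 * Real.pi * Complex.I *
            ((inner ℝ (w - ω i) s : ℝ) : ℂ)))) (x i), ← hfhat]
      _ = _ := by ring
  have hzero : (∫ t, ∑ i, T i t) = 0 := by
    rw [show (0 : ℂ) = ∫ (_ : EuclideanSpace ℝ (Fin n)), (0 : ℂ) by simp]
    refine integral_congr_ae ?_
    filter_upwards [hdep] with t ht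
    rw [hT]
    simp only [← Finset.sum_mul, ht, zero_mul]
  rw [integral_finset_sum Finset.univ (fun i _ => hterm i)] at hzero
  simp_rw [hval] at hzero
  exact hzero

/-- Corollary 2: the frequency-domain version of Theorem 1.  If the Fourier
transform of `f ∈ L¹` decays below `|f̂ 0|/(N-1)` outside the ball of radius `R`
and the frequency coordinates of `Λ` are separated by more than `R`, then the
time-frequency translates of `f` are linearly independent (in the a.e. sense,
i.e. in `L²`). -/
theorem stmt_5 {n N : ℕ} (hN : 2 ≤ N)
    (f : EuclideanSpace ℝ (Fin n) → ℂ) (hf : Integrable f)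
    (fhat : EuclideanSpace ℝ (Fin n) → ℂ)
    (hfhat : ∀ w : EuclideanSpace ℝ (Fin n),
      fhat w = ∫ t, f t * Complex.exp (-(2 * Real.pi * Complex.I * ((inner ℝ w t : ℝ) : ℂ))))
    (hfhat0 : fhat 0 ≠ 0)
    (x ω : Fin N → EuclideanSpace ℝ (Fin n))
    (R : ℝ) (hR : 0 < R)
    (hdecay : ∀ w : EuclideanSpace ℝ (Fin n), R < ‖w‖ →
      ‖fhat w‖ < ‖fhat 0‖ / ((N : ℝ) - 1))
    (hsep : ∀ i j, i ≠ j → R < ‖ω i - ω j‖)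
    (c : Fin N → ℂ)
    (hdep : ∀ᵐ t : EuclideanSpace ℝ (Fin n),
      ∑ i, c i * (Complex.exp (2 * Real.pi * Complex.I * ((inner ℝ (ω i) t : ℝ) : ℂ)) *
        f (t - x i)) = 0) :
    ∀ i, c i = 0 := by
  have hNpos : (0 : ℝ) < (N : ℝ) - 1 := by
    have : (2 : ℝ) ≤ N := by exact_mod_cast hN
    linarith
  have hfh0 : 0 < ‖fhat 0‖ := by
    simpa [norm_pos_iff] using hfhat0
  -- pick j with maximal |c j|
  obtain ⟨j, -, hj⟩ := Finset.exists_max_image Finset.univ (fun i => ‖c i‖)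
    ⟨⟨0, by omega⟩, Finset.mem_univ _⟩
  set M := ‖c j‖ with hM
  suffices hM0 : M = 0 by
    intro i
    have := hj i (Finset.mem_univ i)
    have : ‖c i‖ = 0 := le_antisymm (hM0 ▸ this) (norm_nonneg _)
    simpa using this
  by_contra hM0
  have hMpos : 0 < M := lt_of_le_of_ne (norm_nonneg _) (Ne.symm hM0)
  have hkey := key_eval f hf fhat hfhat x ω c hdep (ω j)
  -- isolate the j-th term
  rw [← Finset.add_sum_erase Finset.univ _ (Finset.mem_univ j)] at hkey
  have hjj : c j * Complex.exp (-(2 * Real.pi * Complex.I *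
      ((inner ℝ (ω j - ω j) (x j) : ℝ) : ℂ))) * fhat (ω j - ω j) = c j * fhat 0 := by
    simp
  rw [hjj] at hkey
  have habs : M * ‖fhat 0‖ =
      ‖∑ i ∈ Finset.univ.erase j,
        c i * Complex.exp (-(2 * Real.pi * Complex.I *
          ((inner ℝ (ω j - ω i) (x i) : ℝ) : ℂ))) * fhat (ω j - ω i)‖ := by
    have : c j * fhat 0 = -∑ i ∈ Finset.univ.erase j,
        c i * Complex.exp (-(2 * Real.pi * Complex.I *
          ((inner ℝ (ω j - ω i) (x i) : ℝ) : ℂ))) * fhat (ω j - ω i) := by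
      linear_combination hkey
    rw [hM, ← norm_mul, this, norm_neg]
  have hlt : ‖∑ i ∈ Finset.univ.erase j,
      c i * Complex.exp (-(2 * Real.pi * Complex.I *
        ((inner ℝ (ω j - ω i) (x i) : ℝ) : ℂ))) * fhat (ω j - ω i)‖ <
      M * ‖fhat 0‖ := by
    calc ‖∑ i ∈ Finset.univ.erase j, _‖
        ≤ ∑ i ∈ Finset.univ.erase j, ‖c i * Complex.exp (-(2 * Real.pi * Complex.I *
            ((inner ℝ (ω j - ω i) (x i) : ℝ) : ℂ))) * fhat (ω j - ω i)‖ :=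
          norm_sum_le _ _
      _ < ∑ _i ∈ Finset.univ.erase j, M * (‖fhat 0‖ / ((N : ℝ) - 1)) := by
          refine Finset.sum_lt_sum_of_nonempty ?_ ?_
          · refine Finset.nonempty_of_ne_empty ?_
            intro h
            have := Finset.card_erase_of_mem (Finset.mem_univ j)
            rw [h] at this
            simp at this
            omega
          · intro i hi
            have hij : j ≠ i := fun h => (Finset.mem_erase.mp hi).1 h.symm
            have hsepi : R < ‖ω j - ω i‖ := hsep j i hij
            have hdec := hdecay (ω j - ω i) hsepi
            rw [norm_mul, norm_mul]
            have h1 : ‖Complex.exp (-(2 * Real.pi * Complex.I *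
                ((inner ℝ (ω j - ω i) (x i) : ℝ) : ℂ)))‖ = 1 := by
              rw [show (-(2 * Real.pi * Complex.I * ((inner ℝ (ω j - ω i) (x i) : ℝ) : ℂ))) =
                ((-(2 * Real.pi * (inner ℝ (ω j - ω i) (x i) : ℝ)) : ℝ) : ℂ) * Complex.I by
                push_cast; ring]
              exact Complex.norm_exp_ofReal_mul_I _
            rw [h1, mul_one]
            have hci : ‖c i‖ ≤ M := hj i (Finset.mem_univ i)
            calc ‖c i‖ * ‖fhat (ω j - ω i)‖
                ≤ M * ‖fhat (ω j - ω i)‖ :=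
                  mul_le_mul_of_nonneg_right hci (norm_nonneg _)
              _ < M * (‖fhat 0‖ / ((N : ℝ) - 1)) :=
                  (mul_lt_mul_iff_right₀ hMpos).mpr hdec
      _ = ((Finset.univ.erase j).card : ℝ) * (M * (‖fhat 0‖ / ((N : ℝ) - 1))) := by
          rw [Finset.sum_const, nsmul_eq_mul]
      _ = M * ‖fhat 0‖ := by
          rw [Finset.card_erase_of_mem (Finset.mem_univ j), Finset.card_univ, Fintype.card_fin]
          have hcard : ((N - 1 : ℕ) : ℝ) = (N : ℝ) - 1 := by
            have : 1 ≤ N := by omega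
            push_cast [this]
            ring
          rw [hcard]
          field_simp
  rw [← habs] at hlt
  exact absurd hlt (lt_irrefl _)
end

section
/- Fix ω ∈ R. Let f(t) = cos(ω t)/|t| for t ≠ 0 (with f undefined or arbitrary at 0, and ω chosen so cos is nonvanishing near 0, e.g. any ω). Then for every finite set Λ = {(x_1,ω_1),...,(x_N,ω_N)} ⊂ R^2 with pairwise distinct x_i, the time-frequency translates exp(2πi ω_i t) f(t - x_i) are linearly independent as functions on R minus the translated singularities. -/
open scoped BigOperators
open Filter Topology

/-- The function `f t = cos(ω t)/|t|` satisfies the HRT conjecture: its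
time-frequency translates (with distinct time coordinates) are linearly
independent on the complement of the translated singularities. -/
theorem stmt_9 (ω : ℝ) {N : ℕ} (x w : Fin N → ℝ) (hx : Function.Injective x)
    (c : Fin N → ℂ)
    (hdep : ∀ t : ℝ, (∀ i, t ≠ x i) →
      ∑ i, c i * (Complex.exp (2 * Real.pi * Complex.I * ((w i * t : ℝ) : ℂ)) *
        ((Real.cos (ω * (t - x i)) / |t - x i| : ℝ) : ℂ)) = 0) :
    ∀ i, c i = 0 := by
  intro i
  set e : Fin N → ℝ → ℂ := fun j t =>
    Complex.exp (2 * Real.pi * Complex.I * ((w j * t : ℝ) : ℂ)) with he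
  set T : Fin N → ℝ → ℂ := fun j t => ((|t - x i| : ℝ) : ℂ) *
    (c j * (e j t * ((Real.cos (ω * (t - x j)) / |t - x j| : ℝ) : ℂ))) with hT
  set F : ℝ → ℂ := fun t => ∑ j, T j t with hF
  -- eventually, t avoids all singularities
  have hev : ∀ᶠ t in 𝓝[≠] (x i), ∀ j, t ≠ x j := by
    rw [eventually_all]
    intro j
    by_cases hji : j = i
    · subst hji
      exact eventually_mem_nhdsWithin.mono (fun t ht => ht)
    · have hne : x i ≠ x j := fun h => hji (hx h).symm
      exact nhdsWithin_le_nhds (eventually_ne_nhds hne)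
  -- F vanishes eventually
  have hF0 : ∀ᶠ t in 𝓝[≠] (x i), F t = 0 := by
    filter_upwards [hev] with t ht
    have h := hdep t ht
    simp only [hF, hT, he, ← Finset.mul_sum, h, mul_zero]
  -- continuity of e j
  have hecont : ∀ j, Continuous (e j) := by
    intro j
    apply Complex.continuous_exp.comp
    continuity
  -- each term tends to its limit
  have hTj : ∀ j, j ≠ i → Filter.Tendsto (T j) (𝓝[≠] (x i)) (𝓝 0) := by
    intro j hji
    have hxij : x i ≠ x j := fun h => hji (hx h).symm
    have h1 : Filter.Tendsto (fun t : ℝ => |t - x i| * (Real.cos (ω * (t - x j)) / |t - x j|))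
        (𝓝 (x i)) (𝓝 0) := by
      have : ContinuousAt (fun t : ℝ => |t - x i| * (Real.cos (ω * (t - x j)) / |t - x j|)) (x i) := by
        apply ContinuousAt.mul
        · fun_prop
        · apply ContinuousAt.div
          · fun_prop
          · fun_prop
          · simpa [abs_eq_zero, sub_eq_zero] using hxij
      have hv : |x i - x i| * (Real.cos (ω * (x i - x j)) / |x i - x j|) = 0 := by simp
      simpa [ContinuousAt, hv] using this
    have h2 : Filter.Tendsto (fun t => c j * e j t) (𝓝 (x i)) (𝓝 (c j * e j (x i))) :=
      (continuous_const.mul (hecont j)).continuousAt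
    have h3 : Filter.Tendsto
        (fun t : ℝ => (c j * e j t) * (((|t - x i| * (Real.cos (ω * (t - x j)) / |t - x j|) : ℝ)) : ℂ))
        (𝓝 (x i)) (𝓝 ((c j * e j (x i)) * ((0 : ℝ) : ℂ))) :=
      h2.mul ((Complex.continuous_ofReal.continuousAt.tendsto.comp h1))
    have h4 : Filter.Tendsto (fun t : ℝ => (c j * e j t) * (((|t - x i| * (Real.cos (ω * (t - x j)) / |t - x j|) : ℝ)) : ℂ)) (𝓝[≠] (x i)) (𝓝 ((c j * e j (x i)) * ((0 : ℝ) : ℂ))) := h3.mono_left nhdsWithin_le_nhds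
    simp only [Complex.ofReal_zero, mul_zero] at h4
    refine h4.congr (fun t => ?_)
    simp only [hT]
    push_cast
    ring
  have hTi : Filter.Tendsto (T i) (𝓝[≠] (x i)) (𝓝 (c i * e i (x i))) := by
    have h2 : Filter.Tendsto (fun t => c i * (e i t * ((Real.cos (ω * (t - x i)) : ℝ) : ℂ)))
        (𝓝 (x i)) (𝓝 (c i * (e i (x i) * ((Real.cos (ω * (x i - x i)) : ℝ) : ℂ)))) := by
      apply ContinuousAt.tendsto
      apply ContinuousAt.mul continuousAt_const
      apply ContinuousAt.mul (hecont i).continuousAt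
      fun_prop
    have h2' : Filter.Tendsto (fun t => c i * (e i t * ((Real.cos (ω * (t - x i)) : ℝ) : ℂ))) (𝓝[≠] (x i)) (𝓝 (c i * (e i (x i) * ((Real.cos (ω * (x i - x i)) : ℝ) : ℂ)))) := h2.mono_left nhdsWithin_le_nhds
    have hval : c i * (e i (x i) * ((Real.cos (ω * (x i - x i)) : ℝ) : ℂ)) = c i * e i (x i) := by
      simp
    rw [hval] at h2'
    refine h2'.congr' ?_
    filter_upwards [eventually_mem_nhdsWithin] with t ht
    have htne : t - x i ≠ 0 := sub_ne_zero.mpr ht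
    have habs : |t - x i| ≠ 0 := abs_ne_zero.mpr htne
    simp only [hT]
    have : ((|t - x i| : ℝ) : ℂ) * ((Real.cos (ω * (t - x i)) / |t - x i| : ℝ) : ℂ)
        = ((Real.cos (ω * (t - x i)) : ℝ) : ℂ) := by
      push_cast
      field_simp
      exact mul_div_cancel_left₀ _ (by exact_mod_cast habs)
    calc c i * (e i t * ((Real.cos (ω * (t - x i)) : ℝ) : ℂ))
        = c i * e i t * (((|t - x i| : ℝ) : ℂ) * ((Real.cos (ω * (t - x i)) / |t - x i| : ℝ) : ℂ)) := by
          rw [this]; ring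
      _ = ((|t - x i| : ℝ) : ℂ) * (c i * (e i t * ((Real.cos (ω * (t - x i)) / |t - x i| : ℝ) : ℂ))) := by ring
  -- F tends to c i * e i (x i)
  have hFt : Filter.Tendsto F (𝓝[≠] (x i)) (𝓝 (c i * e i (x i))) := by
    have : Filter.Tendsto F (𝓝[≠] (x i))
        (𝓝 (∑ j, if j = i then c i * e i (x i) else 0)) := by
      apply tendsto_finset_sum
      intro j _
      by_cases hji : j = i
      · subst hji; simpa using hTi
      · simpa [hji] using hTj j hji
    simpa [Finset.sum_ite_eq'] using this
  have hFt0 : Filter.Tendsto F (𝓝[≠] (x i)) (𝓝 0) :=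
    tendsto_const_nhds.congr' (hF0.mono fun t ht => ht.symm)
  have := tendsto_nhds_unique hFt hFt0
  have hexp : e i (x i) ≠ 0 := Complex.exp_ne_zero _
  exact (mul_eq_zero.mp this).resolve_right hexp
end

section
/- Let f_{C,ω} be as in Example 1 (f_{C,ω}(t) = cos(ωt)/|t| for |t| ≥ 1/C, = C cos(ωt) for |t| < 1/C). Let Λ = {(x_1,ω_1),...,(x_N,ω_N)} ⊂ R^2 with pairwise distinct x_i and let M = min_{i≠j} |x_i - x_j| > 0. If C > (N-1)/M, then the functions exp(2πi ω_i t) f_{C,ω}(t - x_i) are linearly independent. -/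
open scoped BigOperators

/-- Example 1: the time-frequency translates of `f_{C,ω}` along a set `Λ` whose
time coordinates are separated by at least `M` are linearly independent as soon
as `C > (N-1)/M`. -/
theorem stmt_11 {N : ℕ} (hN : 2 ≤ N) (C ω : ℝ) (hC : 0 < C)
    (x w : Fin N → ℝ) (hx : Function.Injective x)
    (M : ℝ) (hM0 : 0 < M) (hM : ∀ i j, i ≠ j → M ≤ |x i - x j|)
    (hCM : ((N : ℝ) - 1) / M < C) :
    LinearIndependent ℂ
      (fun i : Fin N => (fun t =>
        Complex.exp (2 * Real.pi * Complex.I * ((w i * t : ℝ) : ℂ)) *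
          ((if |t - x i| < 1 / C then C * Real.cos (ω * (t - x i))
            else Real.cos (ω * (t - x i)) / |t - x i| : ℝ) : ℂ) : ℝ → ℂ)) := by
  rw [Fintype.linearIndependent_iff]
  intro c hc
  by_contra hne
  push_neg at hne
  obtain ⟨i0, hi0⟩ := hne
  obtain ⟨j, -, hj⟩ := Finset.exists_max_image Finset.univ
    (fun i => ‖c i‖) ⟨i0, Finset.mem_univ i0⟩
  have hcj : 0 < ‖c j‖ :=
    lt_of_lt_of_le (norm_pos_iff.mpr hi0) (hj i0 (Finset.mem_univ i0))
  have hN1 : (1:ℝ) ≤ (N:ℝ) - 1 := by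
    have : (2:ℝ) ≤ (N:ℝ) := by exact_mod_cast hN
    linarith
  have h1MC : 1 / M < C := lt_of_le_of_lt (by gcongr) hCM
  have h1CM : 1 / C < M := by
    rw [div_lt_iff₀ hC]
    rw [div_lt_iff₀ hM0] at h1MC
    nlinarith
  -- evaluate the relation at t = x j
  have h0 := congrFun hc (x j)
  simp only [Finset.sum_apply, Pi.smul_apply, Pi.zero_apply, smul_eq_mul] at h0
  rw [← Finset.sum_erase_add _ _ (Finset.mem_univ j)] at h0
  have hT := eq_neg_of_add_eq_zero_right h0
  -- abs of an exponential factor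
  have habsexp : ∀ r : ℝ,
      ‖Complex.exp (2 * Real.pi * Complex.I * (r : ℂ))‖ = 1 := by
    intro r
    have : (2 * Real.pi * Complex.I * (r : ℂ)) = ((2 * Real.pi * r : ℝ) : ℂ) * Complex.I := by
      push_cast; ring
    rw [this, Complex.norm_exp_ofReal_mul_I]
  -- the diagonal term
  have hTval : (if |x j - x j| < 1 / C then C * Real.cos (ω * (x j - x j))
        else Real.cos (ω * (x j - x j)) / |x j - x j|) = C := by
    rw [sub_self, abs_zero, if_pos (by positivity), mul_zero, Real.cos_zero, mul_one]
  have hTabs : ‖c j *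
      (Complex.exp (2 * Real.pi * Complex.I * ((w j * x j : ℝ) : ℂ)) *
        ((if |x j - x j| < 1 / C then C * Real.cos (ω * (x j - x j))
          else Real.cos (ω * (x j - x j)) / |x j - x j| : ℝ) : ℂ))‖
      = ‖c j‖ * C := by
    rw [hTval, norm_mul, norm_mul, habsexp, Complex.norm_real, Real.norm_eq_abs, abs_of_pos hC, one_mul]
  -- bound on off-diagonal terms
  have hbound : ∀ i ∈ Finset.univ.erase j,
      ‖c i *
        (Complex.exp (2 * Real.pi * Complex.I * ((w i * x j : ℝ) : ℂ)) *
          ((if |x j - x i| < 1 / C then C * Real.cos (ω * (x j - x i))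
            else Real.cos (ω * (x j - x i)) / |x j - x i| : ℝ) : ℂ))‖
      ≤ ‖c j‖ * (1 / M) := by
    intro i hi
    have hij : j ≠ i := (Finset.ne_of_mem_erase hi).symm
    have hMle : M ≤ |x j - x i| := hM j i hij
    have hcond : ¬ |x j - x i| < 1 / C := not_lt.mpr (le_trans h1CM.le hMle)
    rw [if_neg hcond, norm_mul, norm_mul, habsexp, one_mul, Complex.norm_real, Real.norm_eq_abs,
      abs_div, abs_abs]
    have h1 : |Real.cos (ω * (x j - x i))| / |x j - x i| ≤ 1 / M :=
      div_le_div₀ zero_le_one (Real.abs_cos_le_one _) hM0 hMle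
    exact mul_le_mul (hj i (Finset.mem_univ i)) h1
      (by positivity) (norm_nonneg _)
  -- put it together
  have hsum : ‖c j‖ * C ≤ ((N:ℝ) - 1) * (‖c j‖ * (1 / M)) := by
    rw [← hTabs, hT, norm_neg]
    calc ‖∑ i ∈ Finset.univ.erase j, c i *
          (Complex.exp (2 * Real.pi * Complex.I * ((w i * x j : ℝ) : ℂ)) *
            ((if |x j - x i| < 1 / C then C * Real.cos (ω * (x j - x i))
              else Real.cos (ω * (x j - x i)) / |x j - x i| : ℝ) : ℂ))‖
        ≤ ∑ i ∈ Finset.univ.erase j, ‖c i *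
          (Complex.exp (2 * Real.pi * Complex.I * ((w i * x j : ℝ) : ℂ)) *
            ((if |x j - x i| < 1 / C then C * Real.cos (ω * (x j - x i))
              else Real.cos (ω * (x j - x i)) / |x j - x i| : ℝ) : ℂ))‖ :=
          norm_sum_le _ _
      _ ≤ (Finset.univ.erase j).card • (‖c j‖ * (1 / M)) :=
          Finset.sum_le_card_nsmul _ _ _ hbound
      _ = ((N:ℝ) - 1) * (‖c j‖ * (1 / M)) := by
          rw [Finset.card_erase_of_mem (Finset.mem_univ j), Finset.card_univ,
            Fintype.card_fin, nsmul_eq_mul]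
          congr 1
          have h1N : 1 ≤ N := by omega
          push_cast [Nat.cast_sub h1N]
          ring
  have hNM : ((N:ℝ) - 1) < C * M := by
    have := hCM
    rwa [div_lt_iff₀ hM0] at this
  have hsum' : ‖c j‖ * C ≤ (((N:ℝ) - 1) * ‖c j‖) / M := by
    rw [mul_div_assoc, div_eq_mul_one_div]
    exact hsum
  rw [le_div_iff₀ hM0] at hsum'
  nlinarith [hsum', hNM, hcj]
end

section
/- Let f, g ∈ L^2(R^n) with ⟨f,g⟩ ≠ 0, and suppose the short-time Fourier transform V_g f(x,ω) = ⟨f, M_ω T_x g⟩ satisfies |V_g f(λ)| < |⟨f,g⟩|/(N-1) for all λ ∈ R^{2n} with ‖λ‖ > R. If Λ = {λ_1,...,λ_N} ⊂ R^{2n} satisfies ‖λ_i - λ_j‖ > R for all i ≠ j, then the time-frequency shifts π(λ_1)f,...,π(λ_N)f are linearly independent in L^2(R^n). -/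
open scoped BigOperators
open MeasureTheory

private lemma aux_abs_e (r : ℝ) :
    ‖Complex.exp (2 * Real.pi * Complex.I * (r : ℂ))‖ = 1 := by
  rw [show 2 * Real.pi * Complex.I * (r : ℂ) = ((2 * Real.pi * r : ℝ) : ℂ) * Complex.I by
    push_cast; ring, Complex.norm_exp_ofReal_mul_I]

private lemma aux_abs_e_neg (r : ℝ) :
    ‖Complex.exp (-(2 * Real.pi * Complex.I * (r : ℂ)))‖ = 1 := by
  rw [Complex.exp_neg, norm_inv, aux_abs_e, inv_one]

private lemma aux_cont {n : ℕ} (b : EuclideanSpace ℝ (Fin n)) :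
    Continuous (fun t : EuclideanSpace ℝ (Fin n) =>
      Complex.exp (2 * Real.pi * Complex.I * ((inner ℝ b t : ℝ) : ℂ))) :=
  Complex.continuous_exp.comp <| continuous_const.mul <|
    Complex.continuous_ofReal.comp (continuous_const.inner continuous_id)

private lemma aux_G2 {n : ℕ} (f : EuclideanSpace ℝ (Fin n) → ℂ)
    (hf : MemLp f 2 (volume : Measure (EuclideanSpace ℝ (Fin n))))
    (a b : EuclideanSpace ℝ (Fin n)) :
    MemLp (fun t => Complex.exp (2 * Real.pi * Complex.I * ((inner ℝ b t : ℝ) : ℂ)) * f (t - a)) 2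
      (volume : Measure (EuclideanSpace ℝ (Fin n))) := by
  have hfs : MemLp (fun t => f (t - a)) 2 (volume : Measure (EuclideanSpace ℝ (Fin n))) :=
    hf.comp_measurePreserving (measurePreserving_sub_right volume a)
  refine hfs.of_le (((aux_cont b).aestronglyMeasurable).mul hfs.1)
    (Filter.Eventually.of_forall fun t => ?_)
  rw [norm_mul, aux_abs_e, one_mul]

private lemma aux_H2 {n : ℕ} (g : EuclideanSpace ℝ (Fin n) → ℂ)
    (hg : MemLp g 2 (volume : Measure (EuclideanSpace ℝ (Fin n))))
    (a b : EuclideanSpace ℝ (Fin n)) :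
    MemLp (fun t => (starRingEnd ℂ) (g (t - a)) *
      Complex.exp (-(2 * Real.pi * Complex.I * ((inner ℝ b t : ℝ) : ℂ)))) 2
      (volume : Measure (EuclideanSpace ℝ (Fin n))) := by
  have hgs : MemLp (fun t => g (t - a)) 2 (volume : Measure (EuclideanSpace ℝ (Fin n))) :=
    hg.comp_measurePreserving (measurePreserving_sub_right volume a)
  refine hgs.of_le ?_ (Filter.Eventually.of_forall fun t => ?_)
  · exact (Complex.continuous_conj.comp_aestronglyMeasurable hgs.1).mul
      (Complex.continuous_exp.comp (continuous_const.mul <|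
        Complex.continuous_ofReal.comp
          (continuous_const.inner continuous_id)).neg).aestronglyMeasurable
  · rw [norm_mul,
      Complex.norm_conj, aux_abs_e_neg, mul_one]

private lemma aux_int_mul {α : Type*} [MeasurableSpace α] {μ : Measure α} {F G : α → ℂ}
    (hF : MemLp F 2 μ) (hG : MemLp G 2 μ) : Integrable (fun t => F t * G t) μ := by
  have h11 : (1 : ENNReal) / 1 = 1 / 2 + 1 / 2 := by simp; rw [ENNReal.inv_two_add_inv_two]
  have := memLp_one_iff_integrable.mp (hF.smul (r := 1) hG)
  exact (by simpa [Pi.smul_apply, smul_eq_mul, mul_comm] using this : Integrable (F * G) μ)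

private lemma aux_main (p q r s : ℝ) (A B : ℂ) (h : p - q = r - s) :
    Complex.exp (2 * Real.pi * Complex.I * (p : ℂ)) * A *
      (B * Complex.exp (-(2 * Real.pi * Complex.I * (q : ℂ))))
    = Complex.exp (2 * Real.pi * Complex.I * (r : ℂ)) *
      (A * B * Complex.exp (-(2 * Real.pi * Complex.I * (s : ℂ)))) := by
  have h1 : Complex.exp (2 * Real.pi * Complex.I * (p : ℂ)) *
      Complex.exp (-(2 * Real.pi * Complex.I * (q : ℂ)))
      = Complex.exp (2 * Real.pi * Complex.I * (r : ℂ)) *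
      Complex.exp (-(2 * Real.pi * Complex.I * (s : ℂ))) := by
    rw [← Complex.exp_add, ← Complex.exp_add]
    congr 1
    have hc : (p : ℂ) - (q : ℂ) = (r : ℂ) - (s : ℂ) := by exact_mod_cast h
    calc 2 * Real.pi * Complex.I * (p : ℂ) + -(2 * Real.pi * Complex.I * (q : ℂ))
        = 2 * Real.pi * Complex.I * ((p : ℂ) - (q : ℂ)) := by ring
      _ = 2 * Real.pi * Complex.I * ((r : ℂ) - (s : ℂ)) := by rw [hc]
      _ = 2 * Real.pi * Complex.I * (r : ℂ) + -(2 * Real.pi * Complex.I * (s : ℂ)) := by ring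
  calc Complex.exp (2 * Real.pi * Complex.I * (p : ℂ)) * A *
      (B * Complex.exp (-(2 * Real.pi * Complex.I * (q : ℂ))))
      = (Complex.exp (2 * Real.pi * Complex.I * (p : ℂ)) *
        Complex.exp (-(2 * Real.pi * Complex.I * (q : ℂ)))) * (A * B) := by ring
    _ = (Complex.exp (2 * Real.pi * Complex.I * (r : ℂ)) *
        Complex.exp (-(2 * Real.pi * Complex.I * (s : ℂ)))) * (A * B) := by rw [h1]
    _ = _ := by ring

private lemma aux_shift {n : ℕ} (f g : EuclideanSpace ℝ (Fin n) → ℂ)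
    (xi xk wi wk : EuclideanSpace ℝ (Fin n)) :
    (∫ t, (Complex.exp (2 * Real.pi * Complex.I * ((inner ℝ wi t : ℝ) : ℂ)) * f (t - xi)) *
      ((starRingEnd ℂ) (g (t - xk)) *
        Complex.exp (-(2 * Real.pi * Complex.I * ((inner ℝ wk t : ℝ) : ℂ)))))
    = Complex.exp (2 * Real.pi * Complex.I * ((inner ℝ (wi - wk) xi : ℝ) : ℂ)) *
      ∫ t, f t * (starRingEnd ℂ) (g (t - (xk - xi))) *
        Complex.exp (-(2 * Real.pi * Complex.I * ((inner ℝ (wk - wi) t : ℝ) : ℂ))) := by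
  rw [← integral_add_right_eq_self (fun t =>
      (Complex.exp (2 * Real.pi * Complex.I * ((inner ℝ wi t : ℝ) : ℂ)) * f (t - xi)) *
      ((starRingEnd ℂ) (g (t - xk)) *
        Complex.exp (-(2 * Real.pi * Complex.I * ((inner ℝ wk t : ℝ) : ℂ))))) xi,
    ← integral_const_mul]
  refine integral_congr_ae (Filter.Eventually.of_forall fun t => ?_)
  simp only
  rw [add_sub_cancel_right, show t + xi - xk = t - (xk - xi) by abel]
  exact aux_main _ _ _ _ _ _ (by
    simp only [inner_add_right, inner_sub_left]
    ring)

set_option maxHeartbeats 1000000 in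
/-- Theorem 3: if the STFT `V_g f` satisfies `|V_g f λ| < |⟨f,g⟩|/(N-1)` outside
the ball of radius `R` in the time-frequency plane, and the points of `Λ` are
pairwise separated by more than `R`, then the time-frequency shifts `π(λ_i) f`
are linearly independent in `L²(ℝⁿ)`. -/
theorem stmt_12 {n N : ℕ} (hN : 2 ≤ N)
    (f g : EuclideanSpace ℝ (Fin n) → ℂ)
    (hf : MemLp f 2 (volume : Measure (EuclideanSpace ℝ (Fin n))))
    (hg : MemLp g 2 (volume : Measure (EuclideanSpace ℝ (Fin n))))
    (hfg : (∫ t, f t * (starRingEnd ℂ) (g t)) ≠ 0)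
    (V : EuclideanSpace ℝ (Fin n) → EuclideanSpace ℝ (Fin n) → ℂ)
    (hV : ∀ a b, V a b = ∫ t, f t * (starRingEnd ℂ) (g (t - a)) *
      Complex.exp (-(2 * Real.pi * Complex.I * ((inner ℝ b t : ℝ) : ℂ))))
    (x w : Fin N → EuclideanSpace ℝ (Fin n))
    (R : ℝ) (hR : 0 < R)
    (hdecay : ∀ a b : EuclideanSpace ℝ (Fin n),
      R < Real.sqrt (‖a‖ ^ 2 + ‖b‖ ^ 2) →
      ‖V a b‖ <
        ‖∫ t, f t * (starRingEnd ℂ) (g t)‖ / ((N : ℝ) - 1))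
    (hsep : ∀ i j, i ≠ j →
      R < Real.sqrt (‖x i - x j‖ ^ 2 + ‖w i - w j‖ ^ 2))
    (c : Fin N → ℂ)
    (hdep : ∀ᵐ t : EuclideanSpace ℝ (Fin n),
      ∑ i, c i * (Complex.exp (2 * Real.pi * Complex.I * ((inner ℝ (w i) t : ℝ) : ℂ)) *
        f (t - x i)) = 0) :
    ∀ i, c i = 0 := by
  by_contra hcon
  push_neg at hcon
  obtain ⟨i0, hi0⟩ := hcon
  obtain ⟨k, -, hk⟩ := Finset.exists_max_image Finset.univ (fun i => ‖c i‖)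
    ⟨i0, Finset.mem_univ i0⟩
  have hk' : ∀ i, ‖c i‖ ≤ ‖c k‖ := fun i => hk i (Finset.mem_univ i)
  have hck : 0 < ‖c k‖ :=
    lt_of_lt_of_le (norm_pos_iff.mpr hi0) (hk' i0)
  set S : ℂ := ∫ t, f t * (starRingEnd ℂ) (g t) with hS
  have hG2 : ∀ i, MemLp (fun t =>
      Complex.exp (2 * Real.pi * Complex.I * ((inner ℝ (w i) t : ℝ) : ℂ)) * f (t - x i)) 2
      (volume : Measure (EuclideanSpace ℝ (Fin n))) := fun i => aux_G2 f hf (x i) (w i)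
  have hH2 : MemLp (fun t => (starRingEnd ℂ) (g (t - x k)) *
      Complex.exp (-(2 * Real.pi * Complex.I * ((inner ℝ (w k) t : ℝ) : ℂ)))) 2
      (volume : Measure (EuclideanSpace ℝ (Fin n))) := aux_H2 g hg (x k) (w k)
  have hkey : (∫ t, ∑ i, c i *
      ((Complex.exp (2 * Real.pi * Complex.I * ((inner ℝ (w i) t : ℝ) : ℂ)) * f (t - x i)) *
        ((starRingEnd ℂ) (g (t - x k)) *
          Complex.exp (-(2 * Real.pi * Complex.I * ((inner ℝ (w k) t : ℝ) : ℂ)))))) = 0 := by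
    refine integral_eq_zero_of_ae ?_
    filter_upwards [hdep] with t ht
    have hsum : ∑ i, c i *
        ((Complex.exp (2 * Real.pi * Complex.I * ((inner ℝ (w i) t : ℝ) : ℂ)) * f (t - x i)) *
          ((starRingEnd ℂ) (g (t - x k)) *
            Complex.exp (-(2 * Real.pi * Complex.I * ((inner ℝ (w k) t : ℝ) : ℂ)))))
        = (∑ i, c i * (Complex.exp (2 * Real.pi * Complex.I * ((inner ℝ (w i) t : ℝ) : ℂ)) *
            f (t - x i))) *
          ((starRingEnd ℂ) (g (t - x k)) *
            Complex.exp (-(2 * Real.pi * Complex.I * ((inner ℝ (w k) t : ℝ) : ℂ)))) := by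
      rw [Finset.sum_mul]
      exact Finset.sum_congr rfl fun i _ => by ring
    rw [Pi.zero_apply, hsum, ht, zero_mul]
  rw [integral_finset_sum _ (fun i _ => (aux_int_mul (hG2 i) hH2).const_mul (c i))] at hkey
  simp_rw [integral_const_mul] at hkey
  have hint : ∀ i, (∫ t,
      (Complex.exp (2 * Real.pi * Complex.I * ((inner ℝ (w i) t : ℝ) : ℂ)) * f (t - x i)) *
        ((starRingEnd ℂ) (g (t - x k)) *
          Complex.exp (-(2 * Real.pi * Complex.I * ((inner ℝ (w k) t : ℝ) : ℂ)))))
      = Complex.exp (2 * Real.pi * Complex.I * ((inner ℝ (w i - w k) (x i) : ℝ) : ℂ)) *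
        V (x k - x i) (w k - w i) := by
    intro i
    rw [hV]
    exact aux_shift f g (x i) (x k) (w i) (w k)
  simp_rw [hint] at hkey
  have hEk : Complex.exp (2 * Real.pi * Complex.I * ((inner ℝ (w k - w k) (x k) : ℝ) : ℂ)) *
      V (x k - x k) (w k - w k) = S := by
    have h1 : Complex.exp (2 * Real.pi * Complex.I * ((inner ℝ (w k - w k) (x k) : ℝ) : ℂ))
        = 1 := by
      simp only [sub_self, inner_zero_left, Complex.ofReal_zero, mul_zero, Complex.exp_zero]
    have h2 : V (x k - x k) (w k - w k) = S := by
      rw [sub_self, sub_self, hV, hS]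
      refine integral_congr_ae (Filter.Eventually.of_forall fun t => ?_)
      simp
    rw [h1, h2, one_mul]
  rw [← Finset.sum_erase_add _ _ (Finset.mem_univ k), hEk] at hkey
  have hckS : c k * S = -∑ i ∈ Finset.univ.erase k, c i *
      (Complex.exp (2 * Real.pi * Complex.I * ((inner ℝ (w i - w k) (x i) : ℝ) : ℂ)) *
        V (x k - x i) (w k - w i)) := by
    linear_combination hkey
  have hNpos : (0 : ℝ) < (N : ℝ) - 1 := by
    have h2N : (2 : ℝ) ≤ (N : ℝ) := by exact_mod_cast hN
    linarith
  have hSpos : 0 < ‖S‖ := norm_pos_iff.mpr hfg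
  have habs : ‖c k‖ * ‖S‖ < ‖c k‖ * ‖S‖ := by
    calc ‖c k‖ * ‖S‖ = ‖c k * S‖ := (norm_mul _ _).symm
      _ = ‖(∑ i ∈ Finset.univ.erase k, c i *
            (Complex.exp (2 * Real.pi * Complex.I * ((inner ℝ (w i - w k) (x i) : ℝ) : ℂ)) *
              V (x k - x i) (w k - w i)))‖ := by rw [hckS, norm_neg]
      _ ≤ ∑ i ∈ Finset.univ.erase k, ‖(c i *
            (Complex.exp (2 * Real.pi * Complex.I * ((inner ℝ (w i - w k) (x i) : ℝ) : ℂ)) *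
              V (x k - x i) (w k - w i)))‖ := norm_sum_le _ _
      _ < ∑ _i ∈ Finset.univ.erase k,
            ‖c k‖ * (‖S‖ / ((N : ℝ) - 1)) := by
          refine Finset.sum_lt_sum_of_nonempty ?_ fun i hi => ?_
          · refine Finset.card_pos.mp ?_
            rw [Finset.card_erase_of_mem (Finset.mem_univ k), Finset.card_univ, Fintype.card_fin]
            omega
          · have hik : i ≠ k := Finset.ne_of_mem_erase hi
            have hVi : ‖V (x k - x i) (w k - w i)‖ <
                ‖S‖ / ((N : ℝ) - 1) := hdecay _ _ (hsep k i (Ne.symm hik))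
            calc ‖(c i *
                (Complex.exp (2 * Real.pi * Complex.I * ((inner ℝ (w i - w k) (x i) : ℝ) : ℂ)) *
                  V (x k - x i) (w k - w i)))‖
                = ‖c i‖ * ‖V (x k - x i) (w k - w i)‖ := by
                  rw [norm_mul, norm_mul, aux_abs_e, one_mul]
              _ ≤ ‖c k‖ * ‖V (x k - x i) (w k - w i)‖ :=
                  mul_le_mul_of_nonneg_right (hk' i) (norm_nonneg _)
              _ < ‖c k‖ * (‖S‖ / ((N : ℝ) - 1)) :=
                  (mul_lt_mul_iff_right₀ hck).mpr hVi
      _ = ((N : ℝ) - 1) * (‖c k‖ * (‖S‖ / ((N : ℝ) - 1))) := by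
          rw [Finset.sum_const, Finset.card_erase_of_mem (Finset.mem_univ k),
            Finset.card_univ, Fintype.card_fin, nsmul_eq_mul]
          congr 1
          have h1N : 1 ≤ N := by omega
          push_cast [Nat.cast_sub h1N]
          ring
      _ = ‖c k‖ * ‖S‖ := by field_simp
  exact absurd habs (lt_irrefl _)
end

section
/- Let f : R^n → C be continuous and suppose there exist a point x_0 ∈ R^n and R > 0 with |f(x_0 + t)| < |f(x_0)|/(N-1) for all ‖t‖ > R. Then for any Λ = {(x_1,ω_1),...,(x_N,ω_N)} ⊂ R^{2n} with ‖x_i - x_j‖ > R for i ≠ j, the time-frequency translates π(x_i,ω_i)f are linearly independent. -/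
open scoped BigOperators

/-- The translated version of Theorem 1: if `|f (x₀ + t)| < |f x₀|/(N-1)` for
`‖t‖ > R` and the time coordinates of `Λ` are separated by more than `R`, the
time-frequency translates of `f` are linearly independent. -/
theorem stmt_14 {n N : ℕ} (hN : 2 ≤ N)
    (f : EuclideanSpace ℝ (Fin n) → ℂ) (hf : Continuous f)
    (x₀ : EuclideanSpace ℝ (Fin n)) (R : ℝ) (hR : 0 < R)
    (hdecay : ∀ t : EuclideanSpace ℝ (Fin n), R < ‖t‖ →
      ‖f (x₀ + t)‖ < ‖f x₀‖ / ((N : ℝ) - 1))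
    (x ω : Fin N → EuclideanSpace ℝ (Fin n))
    (hsep : ∀ i j, i ≠ j → R < ‖x i - x j‖) :
    LinearIndependent ℂ
      (fun i : Fin N => (fun t =>
        Complex.exp (2 * Real.pi * Complex.I * ((inner ℝ (ω i) t : ℝ) : ℂ)) *
          f (t - x i) : EuclideanSpace ℝ (Fin n) → ℂ)) := by
  have hN1 : (0:ℝ) < (N:ℝ) - 1 := by
    have : (2:ℝ) ≤ (N:ℝ) := by exact_mod_cast hN
    linarith
  have hne01 : (⟨0, by omega⟩ : Fin N) ≠ ⟨1, by omega⟩ := by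
    intro h
    have := congrArg Fin.val h
    simp at this
  set M := ‖f x₀‖ with hMdef
  have hM : 0 < M := by
    have h := hdecay _ (hsep _ _ hne01)
    have h0 : (0:ℝ) ≤ ‖f (x₀ + (x ⟨0, by omega⟩ - x ⟨1, by omega⟩))‖ :=
      norm_nonneg _
    have hdiv : 0 < M / ((N:ℝ) - 1) := lt_of_le_of_lt h0 h
    have := mul_pos hdiv hN1
    rwa [div_mul_cancel₀ _ (ne_of_gt hN1)] at this
  -- phase has modulus one
  have hphase : ∀ (r : ℝ),
      ‖Complex.exp (2 * Real.pi * Complex.I * (r : ℂ))‖ = 1 := by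
    intro r
    have : (2 * (Real.pi:ℂ) * Complex.I * (r:ℂ)) = ((2*Real.pi*r : ℝ):ℂ) * Complex.I := by
      push_cast; ring
    rw [this, Complex.norm_exp_ofReal_mul_I]
  rw [Fintype.linearIndependent_iff]
  intro g hg
  have hg' : ∀ t, ∑ i, g i *
      (Complex.exp (2 * Real.pi * Complex.I * ((inner ℝ (ω i) t : ℝ) : ℂ)) * f (t - x i)) = 0 := by
    intro t
    have := congrFun hg t
    simpa [Finset.sum_apply] using this
  obtain ⟨j, -, hj⟩ := Finset.exists_max_image Finset.univ
    (fun i => ‖g i‖) ⟨⟨0, by omega⟩, Finset.mem_univ _⟩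
  have hgj : g j = 0 := by
    by_contra hgj
    have hgj' : 0 < ‖g j‖ := by
      simpa [norm_pos_iff] using hgj
    set t := x j + x₀ with ht
    have hsum := hg' t
    set F : Fin N → ℂ := fun i =>
      g i * (Complex.exp (2 * Real.pi * Complex.I * ((inner ℝ (ω i) t : ℝ) : ℂ)) * f (t - x i))
      with hF
    have hsplit : F j + ∑ i ∈ Finset.univ.erase j, F i = 0 := by
      rw [Finset.add_sum_erase _ _ (Finset.mem_univ j)]; exact hsum
    have hFj : ‖F j‖ = ‖g j‖ * M := by
      have : t - x j = x₀ := by rw [ht]; exact add_sub_cancel_left _ _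
      rw [hF]
      simp only [this, norm_mul, hphase]
      ring
    have hbound : ∀ i ∈ Finset.univ.erase j,
        ‖F i‖ < ‖g j‖ * (M / ((N:ℝ) - 1)) := by
      intro i hi
      have hij : i ≠ j := Finset.ne_of_mem_erase hi
      have hxt : t - x i = x₀ + (x j - x i) := by
        rw [ht]; abel
      have hdec := hdecay (x j - x i) (hsep j i (Ne.symm hij))
      have hFi : ‖F i‖
          = ‖g i‖ * ‖f (x₀ + (x j - x i))‖ := by
        rw [hF]
        simp only [hxt, norm_mul, hphase]
        ring
      rw [hFi]
      calc ‖g i‖ * ‖f (x₀ + (x j - x i))‖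
          ≤ ‖g j‖ * ‖f (x₀ + (x j - x i))‖ := by
            exact mul_le_mul_of_nonneg_right (hj i (Finset.mem_univ i)) (norm_nonneg _)
        _ < ‖g j‖ * (M / ((N:ℝ) - 1)) :=
            (mul_lt_mul_iff_right₀ hgj').mpr hdec
    have hcard : (Finset.univ.erase j).card = N - 1 := by
      rw [Finset.card_erase_of_mem (Finset.mem_univ j), Finset.card_univ, Fintype.card_fin]
    have hnonempty : (Finset.univ.erase j).Nonempty := by
      rw [← Finset.card_pos, hcard]; omega
    have habs : ‖∑ i ∈ Finset.univ.erase j, F i‖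
        < ‖g j‖ * M := by
      calc ‖∑ i ∈ Finset.univ.erase j, F i‖
          ≤ ∑ i ∈ Finset.univ.erase j, ‖F i‖ :=
            norm_sum_le _ _
        _ < ∑ _i ∈ Finset.univ.erase j, ‖g j‖ * (M / ((N:ℝ) - 1)) :=
            Finset.sum_lt_sum_of_nonempty hnonempty hbound
        _ = ((N:ℝ) - 1) * (‖g j‖ * (M / ((N:ℝ) - 1))) := by
            rw [Finset.sum_const, hcard, nsmul_eq_mul]
            congr 1
            have : (1:ℕ) ≤ N := by omega
            push_cast [Nat.cast_sub this]
            ring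
        _ = ‖g j‖ * M := by
            field_simp
    have : F j = - ∑ i ∈ Finset.univ.erase j, F i := by linear_combination hsplit
    rw [this, norm_neg] at hFj
    rw [hFj] at habs
    exact lt_irrefl _ habs
  intro i
  have h0 : ‖g i‖ ≤ 0 := by
    have := hj i (Finset.mem_univ i)
    simpa [hgj] using this
  have := norm_nonneg (g i)
  have : ‖g i‖ = 0 := le_antisymm h0 this
  simpa [norm_eq_zero] using this
end

section
/- Let f : R → C be continuous, vanishing at infinity, with f(0) ≠ 0. Let (x_1,ω_1), (x_2,ω_2) ∈ R^2 with x_1 ≠ x_2, and suppose |f(t)| < |f(0)| whenever |t| > |x_1 - x_2| (in particular whenever |t| ≥ some R < |x_1-x_2|). Then exp(2πi ω_1 t) f(t - x_1) and exp(2πi ω_2 t) f(t - x_2) are linearly independent. -/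
open Filter

private lemma aux_cocompact (c : ℝ) (hc : c ≠ 0) :
    Tendsto (fun n : ℕ => (n : ℝ) * c) atTop (cocompact ℝ) := by
  rw [cocompact_eq_atBot_atTop]
  rcases hc.lt_or_gt with h | h
  · exact (tendsto_natCast_atTop_atTop.atTop_mul_const_of_neg h).mono_right le_sup_left
  · exact (tendsto_natCast_atTop_atTop.atTop_mul_const h).mono_right le_sup_right

/-- The `N = 2` case of Theorem 1: two time-frequency translates of an
`f ∈ C₀(ℝ)` with `f 0 ≠ 0` and `|f t| < |f 0|` for `|t| > |x₁ - x₂|` are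
linearly independent. -/
theorem stmt_17 (f : ℝ → ℂ) (hf : Continuous f)
    (hC0 : Filter.Tendsto f (Filter.cocompact ℝ) (nhds 0))
    (hf0 : f 0 ≠ 0)
    (x₁ ω₁ x₂ ω₂ : ℝ) (hx : x₁ ≠ x₂)
    (hdecay : ∀ t : ℝ, |x₁ - x₂| < |t| → ‖f t‖ < ‖f 0‖) :
    LinearIndependent ℂ
      ![(fun t => Complex.exp (2 * Real.pi * Complex.I * ((ω₁ * t : ℝ) : ℂ)) *
          f (t - x₁) : ℝ → ℂ),
        (fun t => Complex.exp (2 * Real.pi * Complex.I * ((ω₂ * t : ℝ) : ℂ)) *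
          f (t - x₂) : ℝ → ℂ)] := by
  rw [LinearIndependent.pair_iff]
  intro s t hst
  set d : ℝ := x₁ - x₂ with hd
  have hdne : d ≠ 0 := sub_ne_zero.mpr hx
  have hpt : ∀ u : ℝ,
      s * (Complex.exp (2 * Real.pi * Complex.I * ((ω₁ * u : ℝ) : ℂ)) * f (u - x₁))
      + t * (Complex.exp (2 * Real.pi * Complex.I * ((ω₂ * u : ℝ) : ℂ)) * f (u - x₂)) = 0 := by
    intro u
    have := congrFun hst u
    simpa [Pi.add_apply, Pi.smul_apply, smul_eq_mul] using this
  have hexp : ∀ r : ℝ, ‖Complex.exp (2 * Real.pi * Complex.I * (r : ℂ))‖ = 1 := by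
    intro r
    rw [Complex.norm_exp]
    have : (2 * (Real.pi : ℂ) * Complex.I * (r : ℂ)).re = 0 := by
      simp [Complex.mul_re, Complex.mul_im]
    simp only [this]
    · simp [Real.exp_zero]
  have habs : ∀ v : ℝ, ‖s‖ * ‖f v‖
      = ‖t‖ * ‖f (v + d)‖ := by
    intro v
    have h := hpt (v + x₁)
    have h1 : v + x₁ - x₁ = v := by ring
    have h2 : v + x₁ - x₂ = v + d := by rw [hd]; ring
    rw [h1, h2] at h
    have : s * (Complex.exp (2 * Real.pi * Complex.I * ((ω₁ * (v + x₁) : ℝ) : ℂ)) * f v)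
        = - (t * (Complex.exp (2 * Real.pi * Complex.I * ((ω₂ * (v + x₁) : ℝ) : ℂ)) * f (v + d))) :=
      eq_neg_of_add_eq_zero_left h
    have h3 := congrArg (‖·‖) this
    simp only [norm_neg, norm_mul, hexp, one_mul] at h3
    exact h3
  have hfa0 : 0 < ‖f 0‖ := norm_pos_iff.mpr hf0
  by_cases hs : s = 0
  · refine ⟨hs, ?_⟩
    have h := habs (-d)
    rw [hs] at h
    simp only [norm_zero, zero_mul, neg_add_cancel] at h
    have := h.symm
    rcases mul_eq_zero.mp this with h' | h'
    · exact (norm_eq_zero.mp h')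
    · exact absurd h' (ne_of_gt hfa0)
  · exfalso
    have hsa : 0 < ‖s‖ := norm_pos_iff.mpr hs
    have hta : 0 < ‖t‖ := by
      have h := habs 0
      simp only [zero_add] at h
      by_contra h'
      push_neg at h'
      have ht0 : ‖t‖ = 0 := le_antisymm h' (norm_nonneg _)
      rw [ht0, zero_mul] at h
      exact absurd h (ne_of_gt (mul_pos hsa hfa0))
    set r : ℝ := ‖t‖ / ‖s‖ with hr
    have hrpos : 0 < r := div_pos hta hsa
    have key : ∀ v : ℝ, ‖f v‖ = r * ‖f (v + d)‖ := by
      intro v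
      have h := habs v
      rw [hr, div_mul_eq_mul_div, eq_div_iff (ne_of_gt hsa)]
      linear_combination h
    -- tendsto lemmas
    have tposd : Tendsto (fun n : ℕ => ‖f ((n : ℝ) * d)‖) atTop (nhds 0) := by
      have := (hC0.comp (aux_cocompact d hdne)).norm
      simpa [Function.comp] using this
    have tnegd : Tendsto (fun n : ℕ => ‖f ((n : ℝ) * (-d))‖) atTop (nhds 0) := by
      have := (hC0.comp (aux_cocompact (-d) (neg_ne_zero.mpr hdne))).norm
      simpa [Function.comp] using this
    rcases le_or_gt 1 r with hr1 | hr1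
    · -- |f(-n d)| = r^n |f 0| ≥ |f 0|
      have hA : ∀ n : ℕ, ‖f ((n : ℝ) * (-d))‖ = r ^ n * ‖f 0‖ := by
        intro n
        induction n with
        | zero => simp
        | succ n ih =>
          have h := key (((n : ℝ) + 1) * (-d))
          have he : ((n : ℝ) + 1) * (-d) + d = (n : ℝ) * (-d) := by ring
          rw [he, ih] at h
          have : ((n + 1 : ℕ) : ℝ) * (-d) = ((n : ℝ) + 1) * (-d) := by push_cast; ring
          rw [this, h]
          ring
      have hge : ∀ n : ℕ, ‖f 0‖ ≤ ‖f ((n : ℝ) * (-d))‖ := by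
        intro n
        rw [hA n]
        nlinarith [one_le_pow₀ hr1 (n := n), hfa0]
      have := ge_of_tendsto' tnegd hge
      linarith
    · -- |f(n d)| = |f 0| / r^n ≥ |f 0|
      have hB : ∀ n : ℕ, ‖f ((n : ℝ) * d)‖ = ‖f 0‖ / r ^ n := by
        intro n
        induction n with
        | zero => simp
        | succ n ih =>
          have h := key ((n : ℝ) * d)
          rw [ih] at h
          have he : (n : ℝ) * d + d = ((n + 1 : ℕ) : ℝ) * d := by push_cast; ring
          rw [he] at h
          have hX : ‖f (((n + 1 : ℕ) : ℝ) * d)‖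
              = ‖f 0‖ / r ^ n / r := by
            rw [eq_div_iff (ne_of_gt hrpos)]
            linear_combination -h
          rw [hX, div_div, ← pow_succ]
      have hge : ∀ n : ℕ, ‖f 0‖ ≤ ‖f ((n : ℝ) * d)‖ := by
        intro n
        rw [hB n]
        have hrn1 : r ^ n ≤ 1 := pow_le_one₀ (le_of_lt hrpos) (le_of_lt hr1)
        have hrn : (0:ℝ) < r ^ n := pow_pos hrpos _
        rw [le_div_iff₀ hrn]
        nlinarith
      have := ge_of_tendsto' tposd hge
      linarith
end
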